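/- arXiv:1410.5995 — 3 statements merged into one kernel-verified Lean document; each statement's English description precedes it below -/
import Mathlib

section
/- Let G be a finite connected signed graph. The twisted Laplacian Δ^τ has a nontrivial kernel if and only if G is coherently signed. -/
open scoped Classical
open Matrix

noncomputable section

namespace SignedPaper

variable {V : Type*}

/-- The twisted Laplacian `Δ^τ` of a signed graph: `(Δ^τ f)(x) = d(x) f(x) - ∑_{y ∈ N(x)} sgn(x,y) f(y)`. -/
def twistedLaplacian [Fintype V] [DecidableEq V] (G : SimpleGraph V) [DecidableRel G.Adj]
    (sgn : Sym2 V → ℝ) : Matrix V V ℝ :=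
  Matrix.of fun x y =>
    if x = y then (G.degree x : ℝ) else if G.Adj x y then - sgn s(x, y) else 0

/-- The sign function takes values ±1 on every edge. -/
def IsSigning (G : SimpleGraph V) (sgn : Sym2 V → ℝ) : Prop :=
  ∀ e ∈ G.edgeSet, sgn e = 1 ∨ sgn e = -1

/-- A signed graph is coherently signed if every cycle has sign +1. -/
def IsCoherent (G : SimpleGraph V) (sgn : Sym2 V → ℝ) : Prop :=
  ∀ (v : V) (c : G.Walk v v), c.IsCycle → (c.edges.map sgn).prod = 1

/-- The subgraph induced on a vertex subset `S`, viewed as a graph on `V`. -/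
def inducedOn (G : SimpleGraph V) (S : Set V) : SimpleGraph V where
  Adj x y := G.Adj x y ∧ x ∈ S ∧ y ∈ S
  symm := ⟨fun x y h => ⟨h.1.symm, h.2.2, h.2.1⟩⟩
  loopless := ⟨fun x h => G.loopless.irrefl x h.1⟩

/-- `e_mc(S)`: the minimal number of edges to delete from the induced subgraph on `S`
so that the result is coherently signed. -/
def emc (G : SimpleGraph V) (sgn : Sym2 V → ℝ) (S : Set V) : ℕ :=
  sInf {n : ℕ | ∃ F : Finset (Sym2 V), F.card = n ∧ ↑F ⊆ (inducedOn G S).edgeSet ∧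
    IsCoherent ((inducedOn G S).deleteEdges ↑F) sgn}

/-- `∂S`: the set of edges with exactly one endpoint in `S`. -/
def edgeBoundary [Fintype V] [DecidableEq V] (G : SimpleGraph V) (S : Set V) :
    Finset (Sym2 V) :=
  Finset.univ.filter fun e : Sym2 V => e ∈ G.edgeSet ∧ ∃ x y, e = s(x, y) ∧ x ∈ S ∧ y ∉ S

/-- `ψ(S) = (|∂S| + 2 e_mc(S)) / |S|`. -/
def psiSet [Fintype V] [DecidableEq V] (G : SimpleGraph V) (sgn : Sym2 V → ℝ)
    (S : Finset V) : ℝ :=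
  ((edgeBoundary G ↑S).card + 2 * emc G sgn ↑S) / S.card

/-- `ψ(G) = min_{∅ ≠ S ⊆ V} ψ(S)`. -/
def psi [Fintype V] [DecidableEq V] (G : SimpleGraph V) (sgn : Sym2 V → ℝ) : ℝ :=
  sInf {x : ℝ | ∃ S : Finset V, S.Nonempty ∧ x = psiSet G sgn S}

/-- `ψ̃(G) = min_{∅ ≠ S ⊆ V} (|∂S| + 4 e_mc(S)) / |S|`. -/
def psiTilde [Fintype V] [DecidableEq V] (G : SimpleGraph V) (sgn : Sym2 V → ℝ) : ℝ :=
  sInf {x : ℝ | ∃ S : Finset V, S.Nonempty ∧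
    x = ((edgeBoundary G ↑S).card + 4 * emc G sgn ↑S) / S.card}

/-- `h(S) = min_{∅ ≠ T ⊆ S} |∂T| / |T|`. -/
def hConst [Fintype V] [DecidableEq V] (G : SimpleGraph V) (S : Finset V) : ℝ :=
  sInf {x : ℝ | ∃ T : Finset V, T ⊆ S ∧ T.Nonempty ∧ x = (edgeBoundary G ↑T).card / T.card}

/-- The signed adjacency matrix `A^τ`. -/
def signedAdjMatrix [Fintype V] (G : SimpleGraph V) [DecidableRel G.Adj]
    (sgn : Sym2 V → ℝ) : Matrix V V ℝ :=
  Matrix.of fun x y => if G.Adj x y then sgn s(x, y) else 0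


section Aux

variable {G : SimpleGraph V} {sgn : Sym2 V → ℝ}

lemma walkProd_pm (hsgn : IsSigning G sgn) {u v : V} (p : G.Walk u v) :
    (p.edges.map sgn).prod = 1 ∨ (p.edges.map sgn).prod = -1 := by
  induction p with
  | nil => simp
  | cons h p ih =>
    rw [SimpleGraph.Walk.edges_cons, List.map_cons, List.prod_cons]
    rcases hsgn _ (G.mem_edgeSet.2 h) with hs | hs <;> rcases ih with hp | hp <;>
      rw [hs, hp] <;> norm_num

lemma walkProd_sq (hsgn : IsSigning G sgn) {u v : V} (p : G.Walk u v) :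
    (p.edges.map sgn).prod * (p.edges.map sgn).prod = 1 := by
  rcases walkProd_pm hsgn p with h | h <;> rw [h] <;> norm_num

/-- A closed walk visiting `w` twice beyond its base splits into two shorter closed walks
(up to the value of the sign product). -/
lemma split_closed (sgn : Sym2 V → ℝ) {w : V} (c : G.Walk w w)
    (hcount : 2 ≤ c.support.tail.count w) :
    ∃ (d e : G.Walk w w), 1 ≤ d.length ∧ 1 ≤ e.length ∧ d.length + e.length = c.length ∧
      (c.edges.map sgn).prod = (d.edges.map sgn).prod * (e.edges.map sgn).prod := by
  classical
  cases c with
  | nil => simp at hcount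
  | @cons _ z _ h r =>
    rw [SimpleGraph.Walk.support_cons, List.tail_cons] at hcount
    have hwr : w ∈ r.support := List.count_pos_iff.1 (by omega)
    set r1 := r.takeUntil w hwr with hr1
    set r2 := r.dropUntil w hwr with hr2
    have hspec : r1.append r2 = r := r.take_spec hwr
    have hsupp : r.support = r1.support ++ r2.support.tail := by
      rw [← hspec, SimpleGraph.Walk.support_append]
    have hcount1 : r1.support.count w = 1 := r.count_support_takeUntil_eq_one hwr
    have hcount2 : 1 ≤ r2.support.tail.count w := by
      rw [hsupp, List.count_append] at hcount
      omega
    have hr2len : 1 ≤ r2.length := by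
      have hmem : w ∈ r2.support.tail := List.count_pos_iff.1 (by omega)
      have h1 : 0 < r2.support.tail.length := List.length_pos_iff.mpr (List.ne_nil_of_mem hmem)
      have h2 : r2.support.length = r2.length + 1 := SimpleGraph.Walk.length_support r2
      rw [List.length_tail] at h1
      omega
    refine ⟨SimpleGraph.Walk.cons h r1, r2, by simp [SimpleGraph.Walk.length_cons], hr2len, ?_, ?_⟩
    · have : r1.length + r2.length = r.length := by
        rw [← hspec, SimpleGraph.Walk.length_append]
      simp [SimpleGraph.Walk.length_cons]
      omega
    · have hedges : r.edges = r1.edges ++ r2.edges := by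
        rw [← hspec, SimpleGraph.Walk.edges_append]
      rw [SimpleGraph.Walk.edges_cons, SimpleGraph.Walk.edges_cons, hedges, List.map_cons,
        List.map_append, List.prod_cons, List.prod_append, List.map_cons, List.prod_cons,
        mul_assoc]

/-- Every closed walk in a coherently signed graph has sign product 1. -/
lemma closedWalkProd (hsgn : IsSigning G sgn) (hcoh : IsCoherent G sgn) :
    ∀ (n : ℕ) (v : V) (c : G.Walk v v), c.length = n → (c.edges.map sgn).prod = 1 := by
  classical
  intro n
  induction n using Nat.strong_induction_on with
  | _ n ih =>
    intro v c hlen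
    cases c with
    | nil => simp
    | @cons _ u _ h p =>
      by_cases hnd : p.support.Nodup
      · by_cases he : s(v, u) ∈ p.edges
        · -- the walk is a back-and-forth over a single edge
          cases p with
          | nil => exact absurd rfl h.ne
          | @cons _ w _ h' q =>
            rw [SimpleGraph.Walk.edges_cons, List.mem_cons] at he
            rcases he with he | he
            · have hw : w = v := by
                rcases Sym2.eq_iff.mp he with ⟨h1, h2⟩ | ⟨h1, h2⟩
                · exact absurd h1 h.ne
                · exact h1.symm
              subst hw
              cases q with
              | nil =>
                rw [SimpleGraph.Walk.edges_cons, SimpleGraph.Walk.edges_cons,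
                  SimpleGraph.Walk.edges_nil, List.map_cons, List.map_cons, List.map_nil,
                  List.prod_cons, List.prod_cons, List.prod_nil, mul_one]
                rcases hsgn _ (G.mem_edgeSet.2 h) with hs | hs <;>
                  rw [show s(u, w) = s(w, u) from Sym2.eq_swap, hs] <;> norm_num
              | cons h'' q' =>
                exfalso
                rw [SimpleGraph.Walk.support_cons, List.nodup_cons] at hnd
                have h3 := hnd.2
                rw [SimpleGraph.Walk.support_cons, List.nodup_cons] at h3
                exact h3.1 q'.end_mem_support
            · exfalso
              rw [SimpleGraph.Walk.support_cons, List.nodup_cons] at hnd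
              exact hnd.1 (q.snd_mem_support_of_mem_edges he)
        · exact hcoh v (SimpleGraph.Walk.cons h p)
            ((SimpleGraph.Walk.cons_isCycle_iff p h).2 ⟨(SimpleGraph.Walk.isPath_def p).mpr hnd, he⟩)
      · -- there is a repeated vertex: rotate and split
        obtain ⟨w, hw2⟩ : ∃ w, 2 ≤ p.support.count w := by
          by_contra hc
          push_neg at hc
          exact hnd (List.nodup_iff_count_le_one.2 fun a => by have := hc a; omega)
        have hwp : w ∈ p.support := List.count_pos_iff.1 (by omega)
        have hwc : w ∈ (SimpleGraph.Walk.cons h p).support := by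
          rw [SimpleGraph.Walk.support_cons]; exact List.mem_cons_of_mem _ hwp
        have hperm : List.Perm ((SimpleGraph.Walk.cons h p).rotate w hwc).edges
            (SimpleGraph.Walk.cons h p).edges :=
          ((SimpleGraph.Walk.cons h p).rotate_edges w hwc).perm
        have hprod : (((SimpleGraph.Walk.cons h p).rotate w hwc).edges.map sgn).prod =
            ((SimpleGraph.Walk.cons h p).edges.map sgn).prod := (hperm.map sgn).prod_eq
        have hlen₂ : ((SimpleGraph.Walk.cons h p).rotate w hwc).length = n := by
          have h1 := hperm.length_eq
          rw [SimpleGraph.Walk.length_edges, SimpleGraph.Walk.length_edges] at h1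
          rw [h1, hlen]
        have hcount : 2 ≤ ((SimpleGraph.Walk.cons h p).rotate w hwc).support.tail.count w := by
          have h1 := (((SimpleGraph.Walk.cons h p).support_rotate w hwc).perm).count_eq w
          rw [h1, SimpleGraph.Walk.support_cons, List.tail_cons]
          exact hw2
        obtain ⟨d, e, hd1, he1, hde, hpe⟩ :=
          split_closed sgn ((SimpleGraph.Walk.cons h p).rotate w hwc) hcount
        rw [← hprod, hpe, ih d.length (by omega) w d rfl, ih e.length (by omega) w e rfl, one_mul]

/-- Telescoping: if `f x = sgn(x,y) f y` along every edge, then along any walk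
`f u = (∏ sgn) f w`. -/
lemma telescope {f : V → ℝ} (hkey : ∀ x y, G.Adj x y → f x = sgn s(x, y) * f y) :
    ∀ {u w : V} (p : G.Walk u w), f u = (p.edges.map sgn).prod * f w := by
  intro u w p
  induction p with
  | nil => rw [SimpleGraph.Walk.edges_nil, List.map_nil, List.prod_nil, one_mul]
  | @cons a b c h q ih =>
    rw [SimpleGraph.Walk.edges_cons, List.map_cons, List.prod_cons, mul_assoc, ← ih]
    exact hkey a b h

/-- Explicit formula for the action of the twisted Laplacian. -/
lemma twistedLaplacian_mulVec [Fintype V] [DecidableEq V] (G : SimpleGraph V)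
    [DecidableRel G.Adj] (sgn : Sym2 V → ℝ) (f : V → ℝ) (x : V) :
    (twistedLaplacian G sgn).mulVec f x =
      (G.degree x : ℝ) * f x - ∑ y ∈ G.neighborFinset x, sgn s(x, y) * f y := by
  classical
  have hsplit : ∀ y : V,
      (if x = y then (G.degree x : ℝ) else if G.Adj x y then -sgn s(x, y) else 0) * f y
        = (if y = x then (G.degree x : ℝ) * f x else 0)
          + (if G.Adj x y then -(sgn s(x, y) * f y) else 0) := by
    intro y
    by_cases hxy : x = y
    · subst hxy; simp [G.irrefl]
    · simp [hxy, Ne.symm hxy, ite_mul, neg_mul]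
  rw [Matrix.mulVec, show (twistedLaplacian G sgn) x = fun y =>
    (if x = y then (G.degree x : ℝ) else if G.Adj x y then -sgn s(x, y) else 0) from rfl]
  rw [dotProduct]
  rw [Finset.sum_congr rfl fun y _ => hsplit y, Finset.sum_add_distrib,
    Finset.sum_ite_eq' Finset.univ x fun _ => (G.degree x : ℝ) * f x]
  rw [if_pos (Finset.mem_univ x)]
  have h2 : (∑ y : V, if G.Adj x y then -(sgn s(x, y) * f y) else 0)
      = -∑ y ∈ G.neighborFinset x, sgn s(x, y) * f y := by
    rw [SimpleGraph.neighborFinset_eq_filter, Finset.sum_filter, ← Finset.sum_neg_distrib]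
    exact Finset.sum_congr rfl fun y _ => by by_cases h : G.Adj x y <;> simp [h]
  rw [h2, sub_eq_add_neg]

end Aux

/-- For a finite connected signed graph, the twisted Laplacian has a
nontrivial kernel iff the graph is coherently signed. -/
theorem twistedLaplacian_ker_iff_isCoherent [Fintype V] [DecidableEq V] (G : SimpleGraph V)
    [DecidableRel G.Adj] (hG : G.Connected) (sgn : Sym2 V → ℝ) (hsgn : IsSigning G sgn) :
    (∃ f : V → ℝ, f ≠ 0 ∧ (twistedLaplacian G sgn).mulVec f = 0) ↔ IsCoherent G sgn := by
  classical
  have habs : ∀ {x y : V}, G.Adj x y → |sgn s(x, y)| = 1 := by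
    intro x y hxy
    rcases hsgn _ (G.mem_edgeSet.2 hxy) with hs | hs <;> rw [hs] <;> norm_num
  constructor
  · rintro ⟨f, hf0, hf⟩
    -- the kernel equation at each vertex
    have hker : ∀ x : V, ∑ y ∈ G.neighborFinset x, sgn s(x, y) * f y = (G.degree x : ℝ) * f x := by
      intro x
      have hx := congrFun hf x
      rw [twistedLaplacian_mulVec, Pi.zero_apply, sub_eq_zero] at hx
      exact hx.symm
    -- a vertex of maximal |f|
    haveI : Nonempty V := hG.nonempty
    obtain ⟨x₀, -, hx₀⟩ := Finset.exists_max_image Finset.univ (fun x => |f x|)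
      Finset.univ_nonempty
    set M : ℝ := |f x₀| with hM
    have hmax : ∀ z : V, |f z| ≤ M := fun z => hx₀ z (Finset.mem_univ z)
    have hMpos : 0 < M := by
      by_contra hle
      push_neg at hle
      apply hf0
      funext z
      have := hmax z
      have : |f z| ≤ 0 := le_trans this hle
      simpa using abs_eq_zero.mp (le_antisymm this (abs_nonneg _))
    -- at a maximal vertex every neighbour relation is tight
    have step : ∀ x : V, |f x| = M → ∀ y : V, G.Adj x y → sgn s(x, y) * f y = f x := by
      intro x hx y hy
      have hsum : ∑ z ∈ G.neighborFinset x, (f x - sgn s(x, z) * f z) = 0 := by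
        rw [Finset.sum_sub_distrib, hker x, Finset.sum_const, nsmul_eq_mul,
          SimpleGraph.card_neighborFinset_eq_degree, sub_self]
      have hbound : ∀ z ∈ G.neighborFinset x, |sgn s(x, z) * f z| ≤ M := by
        intro z hz
        rw [abs_mul, habs ((G.mem_neighborFinset x z).mp hz), one_mul]
        exact hmax z
      have hyx : y ∈ G.neighborFinset x := (G.mem_neighborFinset x y).mpr hy
      rcases le_or_gt 0 (f x) with hfx | hfx
      · have hfxM : f x = M := by rw [← hx, abs_of_nonneg hfx]
        have hterm := (Finset.sum_eq_zero_iff_of_nonneg (fun z hz => by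
          have h1 : sgn s(x, z) * f z ≤ M := le_trans (le_abs_self _) (hbound z hz)
          rw [hfxM]; linarith)).1 hsum y hyx
        linarith [hterm]
      · have hfxM : f x = -M := by
          rw [← hx, abs_of_neg hfx]; ring
        have hterm := (Finset.sum_eq_zero_iff_of_nonpos (fun z hz => by
          have h1 : -M ≤ sgn s(x, z) * f z := le_trans (neg_le_neg (hbound z hz)) (neg_abs_le _)
          rw [hfxM]; linarith)).1 hsum y hyx
        linarith [hterm]
    -- every vertex attains the maximum, by connectivity
    have hall : ∀ x : V, |f x| = M := by
      have H : ∀ (u w : V) (p : G.Walk u w), |f u| = M → |f w| = M := by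
        intro u w p
        induction p with
        | nil => exact id
        | @cons a b c h q ih =>
          intro hu
          refine ih ?_
          have := step a hu b h
          calc |f b| = |sgn s(a, b) * f b| := by rw [abs_mul, habs h, one_mul]
            _ = |f a| := by rw [this]
            _ = M := hu
      intro x
      obtain ⟨p⟩ := hG.preconnected x₀ x
      exact H x₀ x p rfl
    have hkey : ∀ x y, G.Adj x y → f x = sgn s(x, y) * f y :=
      fun x y h => (step x (hall x) y h).symm
    -- conclude coherence by telescoping around each cycle
    intro v c _
    have ht := telescope hkey c
    have hfv : f v ≠ 0 := by
      intro h0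
      have h1 := hall v
      rw [h0, abs_zero] at h1
      exact hMpos.ne' h1.symm
    have : ((c.edges.map sgn).prod) * f v = 1 * f v := by rw [one_mul, ← ht]
    exact mul_right_cancel₀ hfv this
  · intro hcoh
    have hne : Nonempty V := hG.nonempty
    obtain ⟨v₀⟩ := hne
    set θ : V → ℝ := fun x => (((hG.preconnected v₀ x).some).edges.map sgn).prod with hθ
    have hθpm : ∀ x, θ x = 1 ∨ θ x = -1 := fun x => walkProd_pm hsgn _
    have hθsq : ∀ x, θ x * θ x = 1 := fun x => walkProd_sq hsgn _
    have hadj : ∀ x y, G.Adj x y → sgn s(x, y) * θ y = θ x := by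
      intro x y hxy
      set p := (hG.preconnected v₀ x).some with hp
      set q := (hG.preconnected v₀ y).some with hq
      have h1 : (((p.append (SimpleGraph.Walk.cons hxy q.reverse)).edges.map sgn)).prod = 1 :=
        closedWalkProd hsgn hcoh _ v₀ _ rfl
      rw [SimpleGraph.Walk.edges_append, SimpleGraph.Walk.edges_cons,
        SimpleGraph.Walk.edges_reverse, List.map_append, List.prod_append, List.map_cons,
        List.prod_cons, List.map_reverse, List.prod_reverse] at h1
      have h2 := hθsq x
      have h2' : (p.edges.map sgn).prod * (p.edges.map sgn).prod = 1 := h2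
      linear_combination (p.edges.map sgn).prod * h1
        - sgn s(x, y) * ((q.edges.map sgn)).prod * h2'
    refine ⟨θ, ?_, ?_⟩
    · intro h0
      have := congrFun h0 v₀
      rcases hθpm v₀ with h | h <;> rw [Pi.zero_apply] at this <;> rw [this] at h <;> norm_num at h
    · funext x
      rw [Pi.zero_apply, twistedLaplacian_mulVec]
      have : ∑ y ∈ G.neighborFinset x, sgn s(x, y) * θ y
          = ∑ y ∈ G.neighborFinset x, θ x :=
        Finset.sum_congr rfl fun y hy => hadj x y ((G.mem_neighborFinset x y).mp hy)
      rw [this, Finset.sum_const, nsmul_eq_mul, SimpleGraph.card_neighborFinset_eq_degree,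
        sub_self]


end SignedPaper
end
end

section
/- Let G be a finite signed graph and let S and T be disjoint subsets of V with S ∪ T nonempty. Then ⟨r_{S,T}, Δ^τ r_{S,T}⟩ ≥ 4 e_mc(S ∪ T) + |∂(S ∪ T)|, where r_{S,T} is the function equal to 1 on S, −1 on T and 0 elsewhere. -/
open scoped Classical
open Matrix

noncomputable section

namespace SignedPaper

variable {V : Type*}

lemma sum_dart_edge [Fintype V] [DecidableEq V] (G : SimpleGraph V) [DecidableRel G.Adj]
    (F : Sym2 V → ℝ) :
    ∑ d : G.Dart, F d.edge = 2 * ∑ e ∈ G.edgeFinset, F e := by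
  rw [← Finset.sum_fiberwise_of_maps_to (g := SimpleGraph.Dart.edge) (t := G.edgeFinset)
      (fun d _ => SimpleGraph.mem_edgeFinset.mpr d.edge_mem), Finset.mul_sum]
  refine Finset.sum_congr rfl fun e he => ?_
  have hcard : ({d : G.Dart | d.edge = e} : Finset _).card = 2 :=
    G.dart_edge_fiber_card e (SimpleGraph.mem_edgeFinset.mp he)
  calc ∑ d ∈ Finset.univ.filter (fun d : G.Dart => d.edge = e), F d.edge
      = ∑ _d ∈ Finset.univ.filter (fun d : G.Dart => d.edge = e), F e :=
        Finset.sum_congr rfl (fun d hd => by rw [(Finset.mem_filter.mp hd).2])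
    _ = 2 * F e := by
        rw [Finset.sum_const]
        rw [show (Finset.univ.filter (fun d : G.Dart => d.edge = e)).card = 2 from hcard]
        simp [two_mul]

lemma sum_adj_eq_sum_dart [Fintype V] [DecidableEq V] (G : SimpleGraph V) [DecidableRel G.Adj]
    (g : V → V → ℝ) :
    (∑ x, ∑ y, if G.Adj x y then g x y else 0) = ∑ d : G.Dart, g d.fst d.snd := by
  rw [← Finset.sum_product', Finset.univ_product_univ, ← Finset.sum_filter]
  refine (Finset.sum_bij' (fun (d : G.Dart) _ => d.toProd)
    (fun p hp => ⟨p, (Finset.mem_filter.mp hp).2⟩) ?_ ?_ ?_ ?_ ?_).symm <;> simp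

lemma sum_dart_symm [Fintype V] [DecidableEq V] (G : SimpleGraph V) [DecidableRel G.Adj]
    (g : G.Dart → ℝ) : ∑ d : G.Dart, g d.symm = ∑ d : G.Dart, g d :=
  Fintype.sum_equiv (SimpleGraph.Dart.symm_involutive.toPerm _)
    (fun d => g d.symm) g (fun _ => rfl)

lemma quad_eq_edge_sum [Fintype V] [DecidableEq V] (G : SimpleGraph V) [DecidableRel G.Adj]
    (sgn : Sym2 V → ℝ) (f : V → ℝ) :
    f ⬝ᵥ (twistedLaplacian G sgn).mulVec f
      = ∑ e ∈ G.edgeFinset,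
          Sym2.lift ⟨fun x y => f x * f x + f y * f y - 2 * sgn s(x, y) * (f x * f y),
            fun a b => by dsimp only; rw [Sym2.eq_swap]; ring⟩ e := by
  set W : Sym2 V → ℝ := Sym2.lift ⟨fun x y => f x * f x + f y * f y - 2 * sgn s(x, y) * (f x * f y),
            fun a b => by dsimp only; rw [Sym2.eq_swap]; ring⟩ with hWdef
  set g : V → V → ℝ := fun x y => f x * f x - sgn s(x, y) * (f x * f y) with hg
  have hQ : f ⬝ᵥ (twistedLaplacian G sgn).mulVec f
      = ∑ x, ∑ y, if G.Adj x y then g x y else 0 := by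
    have hterm : ∀ x y : V, f x * (twistedLaplacian G sgn x y * f y)
        = (if x = y then (G.degree x : ℝ) * (f x * f y) else 0)
          + (if G.Adj x y then -(sgn s(x, y)) * (f x * f y) else 0) := by
      intro x y
      by_cases h : x = y
      · subst h
        simp [twistedLaplacian, G.irrefl]
        ring
      · by_cases ha : G.Adj x y
        · simp [twistedLaplacian, h, ha]; ring
        · simp [twistedLaplacian, h, ha]
    simp only [dotProduct, Matrix.mulVec, Finset.mul_sum]
    simp only [hterm]
    rw [Finset.sum_congr rfl (fun x _ => Finset.sum_add_distrib), Finset.sum_add_distrib]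
    have h1 : ∀ x : V, (∑ y, if x = y then (G.degree x : ℝ) * (f x * f y) else 0)
        = ∑ y, if G.Adj x y then f x * f x else 0 := by
      intro x
      rw [Finset.sum_ite_eq Finset.univ x (fun y => (G.degree x : ℝ) * (f x * f y))]
      simp only [Finset.mem_univ, if_true]
      rw [← Finset.sum_filter, Finset.sum_const, ← SimpleGraph.neighborFinset_eq_filter,
        nsmul_eq_mul, SimpleGraph.card_neighborFinset_eq_degree]
    rw [Finset.sum_congr rfl fun x _ => h1 x, ← Finset.sum_add_distrib]
    refine Finset.sum_congr rfl fun x _ => ?_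
    rw [← Finset.sum_add_distrib]
    refine Finset.sum_congr rfl fun y _ => ?_
    by_cases ha : G.Adj x y <;> simp [ha, hg] <;> ring
  have h2 : (2:ℝ) * (f ⬝ᵥ (twistedLaplacian G sgn).mulVec f) = ∑ d : G.Dart, W d.edge := by
    have hA := sum_adj_eq_sum_dart G g
    have hB := sum_dart_symm G (fun d : G.Dart => g d.fst d.snd)
    calc (2:ℝ) * (f ⬝ᵥ (twistedLaplacian G sgn).mulVec f)
        = (∑ d : G.Dart, g d.fst d.snd) + ∑ d : G.Dart, g d.symm.fst d.symm.snd := by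
          rw [two_mul, hQ, hA, hB]
      _ = ∑ d : G.Dart, (g d.fst d.snd + g d.symm.fst d.symm.snd) :=
          Finset.sum_add_distrib.symm
      _ = ∑ d : G.Dart, W d.edge := by
          refine Finset.sum_congr rfl fun d _ => ?_
          show g d.fst d.snd + g d.snd d.fst = W s(d.fst, d.snd)
          rw [hWdef, Sym2.lift_mk, hg]
          dsimp only
          rw [show s(d.snd, d.fst) = s(d.fst, d.snd) from Sym2.eq_swap]
          ring
  have h3 := sum_dart_edge G W
  rw [h3] at h2
  linarith


lemma walk_sgn_prod {H : SimpleGraph V} (sgn : Sym2 V → ℝ) (f : V → ℝ)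
    (hkey : ∀ x y, H.Adj x y → sgn s(x, y) = f x * f y ∧ f y * f y = 1) :
    ∀ {u v : V} (w : H.Walk u v), ((w.edges.map sgn).prod) * f v = f u := by
  intro u v w
  induction w with
  | nil => simp
  | @cons a b c h p ih =>
    obtain ⟨hs, hsq⟩ := hkey _ _ h
    simp only [SimpleGraph.Walk.edges_cons, List.map_cons, List.prod_cons]
    rw [mul_assoc, ih, hs, mul_assoc, hsq, mul_one]

/-- For disjoint `S, T ⊆ V` with `S ∪ T ≠ ∅` and `r_{S,T}` the function
which is `1` on `S`, `-1` on `T` and `0` elsewhere,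
`⟨r_{S,T}, Δ^τ r_{S,T}⟩ ≥ 4 e_mc(S ∪ T) + |∂(S ∪ T)|`. -/
theorem rST_inner_twistedLaplacian_ge [Fintype V] [DecidableEq V] (G : SimpleGraph V)
    [DecidableRel G.Adj] (sgn : Sym2 V → ℝ) (hsgn : IsSigning G sgn)
    (S T : Finset V) (hST : Disjoint S T) (hne : (S ∪ T).Nonempty) :
    (fun x => if x ∈ S then (1 : ℝ) else if x ∈ T then -1 else 0) ⬝ᵥ
        (twistedLaplacian G sgn).mulVec
          (fun x => if x ∈ S then (1 : ℝ) else if x ∈ T then -1 else 0)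
      ≥ 4 * (emc G sgn ↑(S ∪ T) : ℝ) + (edgeBoundary G ↑(S ∪ T)).card := by
  classical
  set f : V → ℝ := fun x => if x ∈ S then (1 : ℝ) else if x ∈ T then -1 else 0 with hf
  set U : Finset V := S ∪ T with hUdef
  have hfU : ∀ x ∈ U, f x = 1 ∨ f x = -1 := by
    intro x hx
    rcases Finset.mem_union.mp hx with h | h
    · left; simp [hf, h]
    · right
      have hxS : x ∉ S := fun hs => (Finset.disjoint_left.mp hST hs) h
      simp [hf, hxS, h]
  have hsq : ∀ x ∈ U, f x * f x = 1 := by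
    intro x hx; rcases hfU x hx with h | h <;> rw [h] <;> norm_num
  have hf0 : ∀ x, x ∉ U → f x = 0 := by
    intro x hx
    rw [hUdef, Finset.mem_union, not_or] at hx
    simp [hf, hx.1, hx.2]
  set W : Sym2 V → ℝ := Sym2.lift ⟨fun x y => f x * f x + f y * f y - 2 * sgn s(x, y) * (f x * f y),
    fun a b => by dsimp only; rw [Sym2.eq_swap]; ring⟩ with hWdef
  have hQ : f ⬝ᵥ (twistedLaplacian G sgn).mulVec f = ∑ e ∈ G.edgeFinset, W e :=
    quad_eq_edge_sum G sgn f
  have hWval : ∀ x y : V, W s(x, y)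
      = f x * f x + f y * f y - 2 * sgn s(x, y) * (f x * f y) := fun x y => rfl
  have hBd : ∀ e, e ∈ edgeBoundary G ↑U ↔ e ∈ G.edgeSet ∧
      ∃ x y, e = s(x, y) ∧ x ∈ (↑U : Set V) ∧ y ∉ (↑U : Set V) := by
    intro e; simp [edgeBoundary]
  set B : Finset (Sym2 V) :=
    Finset.univ.filter (fun e => e ∈ (inducedOn G ↑U).edgeSet ∧ W e ≠ 0) with hBdef
  have hBmem : ∀ e, e ∈ B ↔ e ∈ (inducedOn G ↑U).edgeSet ∧ W e ≠ 0 := by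
    intro e; simp [hBdef]
  have hBsub : ↑B ⊆ (inducedOn G ↑U).edgeSet := by
    intro e he; exact ((hBmem e).mp he).1
  -- every edge remaining after deleting B satisfies sgn = f x * f y
  have hkey : ∀ x y, ((inducedOn G ↑U).deleteEdges ↑B).Adj x y →
      sgn s(x, y) = f x * f y ∧ f y * f y = 1 := by
    intro x y h
    rw [SimpleGraph.deleteEdges_adj] at h
    obtain ⟨hind, hnB⟩ := h
    obtain ⟨hGadj, hxU, hyU⟩ : G.Adj x y ∧ x ∈ (↑U : Set V) ∧ y ∈ (↑U : Set V) := hind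
    have hxU' : x ∈ U := hxU
    have hyU' : y ∈ U := hyU
    have hW0 : W s(x, y) = 0 := by
      by_contra hne
      exact hnB ((hBmem s(x, y)).mpr ⟨(inducedOn G ↑U).mem_edgeSet.mpr ⟨hGadj, hxU, hyU⟩, hne⟩)
    rw [hWval x y] at hW0
    refine ⟨?_, hsq y hyU'⟩
    have hsv := hsgn s(x, y) (G.mem_edgeSet.mpr hGadj)
    rcases hsv with hs | hs <;> rcases hfU x hxU' with hx | hx <;>
      rcases hfU y hyU' with hy | hy <;>
      rw [hs, hx, hy] <;> rw [hs, hx, hy] at hW0 <;> norm_num at hW0 <;> norm_num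
  have hcoh : IsCoherent ((inducedOn G ↑U).deleteEdges ↑B) sgn := by
    intro v c hc
    cases c with
    | nil => exact absurd rfl hc.ne_nil
    | cons h p =>
      have hsqv : f v * f v = 1 := (hkey _ _ h.symm).2
      have hw := walk_sgn_prod sgn f hkey (SimpleGraph.Walk.cons h p)
      calc ((SimpleGraph.Walk.cons h p).edges.map sgn).prod
          = ((SimpleGraph.Walk.cons h p).edges.map sgn).prod * (f v * f v) := by
            rw [hsqv, mul_one]
        _ = (((SimpleGraph.Walk.cons h p).edges.map sgn).prod * f v) * f v := by ring
        _ = f v * f v := by rw [hw]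
        _ = 1 := hsqv
  have hemc : emc G sgn ↑U ≤ B.card := Nat.sInf_le ⟨B, rfl, hBsub, hcoh⟩
  have hW4 : ∀ e ∈ B, W e = 4 := by
    intro e
    induction e using Sym2.ind with
    | _ x y =>
      intro he
      obtain ⟨hmem, hne⟩ := (hBmem s(x, y)).mp he
      obtain ⟨hGadj, hxU, hyU⟩ : G.Adj x y ∧ x ∈ (↑U : Set V) ∧ y ∈ (↑U : Set V) :=
        (inducedOn G ↑U).mem_edgeSet.mp hmem
      have hxU' : x ∈ U := hxU
      have hyU' : y ∈ U := hyU
      rw [hWval x y] at hne ⊢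
      have hsv := hsgn s(x, y) (G.mem_edgeSet.mpr hGadj)
      rcases hsv with hs | hs <;> rcases hfU x hxU' with hx | hx <;>
        rcases hfU y hyU' with hy | hy <;>
        rw [hs, hx, hy] at hne ⊢ <;> norm_num at hne <;> norm_num
  have hW1 : ∀ e ∈ edgeBoundary G ↑U, W e = 1 := by
    intro e he
    obtain ⟨hmem, x, y, rfl, hx, hy⟩ := (hBd e).mp he
    have hx' : x ∈ U := hx
    have hy' : y ∉ U := fun h => hy h
    rw [hWval x y, hf0 y hy']
    rcases hfU x hx' with h | h <;> rw [h] <;> norm_num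
  have hWnn : ∀ e ∈ G.edgeFinset, 0 ≤ W e := by
    intro e
    induction e using Sym2.ind with
    | _ x y =>
      intro he
      have hsv := hsgn s(x, y) (SimpleGraph.mem_edgeFinset.mp he)
      rw [hWval x y]
      rcases hsv with hs | hs <;> rw [hs] <;>
        [nlinarith [sq_nonneg (f x - f y)]; nlinarith [sq_nonneg (f x + f y)]]
  have hdisj : Disjoint B (edgeBoundary G ↑U) := by
    rw [Finset.disjoint_left]
    intro e heB heBd
    obtain ⟨-, x, y, rfl, hx, hy⟩ := (hBd e).mp heBd
    have hmem := ((hBmem s(x, y)).mp heB).1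
    obtain ⟨-, -, hyU⟩ : G.Adj x y ∧ x ∈ (↑U : Set V) ∧ y ∈ (↑U : Set V) :=
      (inducedOn G ↑U).mem_edgeSet.mp hmem
    exact hy hyU
  have hsub : B ∪ edgeBoundary G ↑U ⊆ G.edgeFinset := by
    intro e he
    rcases Finset.mem_union.mp he with h | h
    · have hmem := ((hBmem e).mp h).1
      rw [SimpleGraph.mem_edgeFinset]
      revert hmem
      induction e using Sym2.ind with
      | _ x y =>
        intro hmem
        exact G.mem_edgeSet.mpr ((inducedOn G ↑U).mem_edgeSet.mp hmem).1
    · exact SimpleGraph.mem_edgeFinset.mpr ((hBd e).mp h).1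
  have hsum1 : ∑ e ∈ B ∪ edgeBoundary G ↑U, W e ≤ ∑ e ∈ G.edgeFinset, W e :=
    Finset.sum_le_sum_of_subset_of_nonneg hsub (fun e he _ => hWnn e he)
  have hsum2 : ∑ e ∈ B ∪ edgeBoundary G ↑U, W e
      = 4 * (B.card : ℝ) + (edgeBoundary G ↑U).card := by
    rw [Finset.sum_union hdisj, Finset.sum_congr rfl hW4, Finset.sum_congr rfl hW1,
      Finset.sum_const, Finset.sum_const, nsmul_eq_mul, nsmul_eq_mul, mul_comm, mul_one]
  have hcast : (emc G sgn ↑U : ℝ) ≤ (B.card : ℝ) := Nat.cast_le.mpr hemc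
  rw [ge_iff_le, hQ]
  calc 4 * (emc G sgn ↑U : ℝ) + (edgeBoundary G ↑U).card
      ≤ 4 * (B.card : ℝ) + (edgeBoundary G ↑U).card := by linarith
    _ = ∑ e ∈ B ∪ edgeBoundary G ↑U, W e := hsum2.symm
    _ ≤ ∑ e ∈ G.edgeFinset, W e := hsum1



end SignedPaper
end
end

section
/- Let G be a finite nonempty signed graph and let μ₁ be the smallest eigenvalue of the twisted Laplacian Δ^τ. Then μ₁ ≤ ψ̃(G) ≤ 2 ψ(G). -/
open scoped Classical
open Matrix

noncomputable section

namespace SignedPaper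

variable {V : Type*}

open scoped Pointwise

lemma prod_pm {l : List ℝ} (h : ∀ a ∈ l, a = 1 ∨ a = -1) : l.prod = 1 ∨ l.prod = -1 := by
  induction l with
  | nil => simp
  | cons a t ih =>
    rcases h a (by simp) with h1 | h1 <;>
    rcases ih (fun b hb => h b (by simp [hb])) with h2 | h2 <;> simp [h1, h2]

lemma closed_walk_prod (H : SimpleGraph V) (sgn : Sym2 V → ℝ)
    (hsgn : ∀ e ∈ H.edgeSet, sgn e = 1 ∨ sgn e = -1) (hco : IsCoherent H sgn) :
    ∀ (n : ℕ) {v : V} (w : H.Walk v v), w.length ≤ n → ((w.edges.map sgn).prod = 1) := by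
  intro n
  induction n using Nat.strong_induction_on with
  | _ n IH =>
    intro v w hw
    cases w with
    | nil => simp
    | @cons _ x _ h q =>
      by_cases hnod : q.support.Nodup
      · -- q is a path
        have hq : q.IsPath := SimpleGraph.Walk.IsPath.mk' hnod
        by_cases he : s(v, x) ∈ q.edges
        · -- q must be the single edge x-v
          have hvx : v ≠ x := h.ne
          have hr : s(v, x) ∈ q.reverse.edges := by
            rw [SimpleGraph.Walk.edges_reverse, List.mem_reverse]; exact he
          have hrp : q.reverse.IsPath := hq.reverse
          have hnn : ¬ q.reverse.Nil := by
            rw [SimpleGraph.Walk.nil_iff_length_eq, SimpleGraph.Walk.length_reverse]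
            intro h0
            exact hvx (q.eq_of_length_eq_zero h0).symm
          obtain ⟨z, h2, t, ht⟩ := SimpleGraph.Walk.not_nil_iff.mp hnn
          rw [ht] at hr hrp
          have hvnt : v ∉ t.support := (SimpleGraph.Walk.cons_isPath_iff _ _).mp hrp |>.2
          have htp : t.IsPath := ((SimpleGraph.Walk.cons_isPath_iff _ _).mp hrp).1
          have hxz : x = z := by
            rw [SimpleGraph.Walk.edges_cons, List.mem_cons] at hr
            rcases hr with h3 | h3
            · rcases Sym2.eq_iff.mp h3 with ⟨_, h4⟩ | ⟨h4, h5⟩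
              · exact h4
              · exact absurd h4 h2.ne
            · exact absurd (t.fst_mem_support_of_mem_edges h3) hvnt
          subst hxz
          have htnil : t = SimpleGraph.Walk.nil := (SimpleGraph.Walk.isPath_iff_eq_nil (p := t)).mp htp
          have hq' : q = (SimpleGraph.Walk.cons h2 t).reverse := by
            rw [← ht, SimpleGraph.Walk.reverse_reverse]
          subst htnil
          rw [hq']
          have hsv : sgn s(v, x) = 1 ∨ sgn s(v, x) = -1 := hsgn _ h
          simp only [SimpleGraph.Walk.edges_cons, SimpleGraph.Walk.edges_reverse,
            SimpleGraph.Walk.edges_nil, List.reverse_cons, List.reverse_nil, List.nil_append,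
            List.map_cons, List.map_nil, List.prod_cons, List.prod_nil, mul_one]
          rcases hsv with h5 | h5 <;> rw [h5] <;> norm_num
        · -- cycle
          exact hco v _ ((SimpleGraph.Walk.cons_isCycle_iff q h).mpr ⟨hq, he⟩)
      · -- duplicate vertex u in q.support
        have : ∃ u, 2 ≤ q.support.count u := by
          by_contra hc
          push_neg at hc
          exact hnod (List.nodup_iff_count_le_one.mpr fun a => by have := hc a; omega)
        obtain ⟨u, hu2⟩ := this
        have hu : u ∈ q.support := List.count_pos_iff.mp (by omega)
        have hsplit := q.take_spec hu
        set d1 := q.takeUntil u hu with hd1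
        set d2 := q.dropUntil u hu with hd2
        have hcount1 : d1.support.count u = 1 := q.count_support_takeUntil_eq_one hu
        have hutail : u ∈ d2.support.tail := by
          have hsup : q.support = d1.support ++ d2.support.tail := by
            rw [← hsplit]; exact SimpleGraph.Walk.support_append _ _
          rw [hsup, List.count_append, hcount1] at hu2
          exact List.count_pos_iff.mp (by omega)
        have hd2nn : ¬ d2.Nil := by
          intro hnil
          rw [SimpleGraph.Walk.nil_iff_support_eq] at hnil
          rw [hnil] at hutail
          simp at hutail
        obtain ⟨z, h2, d3, hd3⟩ := SimpleGraph.Walk.not_nil_iff.mp hd2nn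
        have hud3 : u ∈ d3.support := by
          rw [hd3] at hutail
          simpa using hutail
        set m1 := d3.takeUntil u hud3 with hm1
        set m2 := d3.dropUntil u hud3 with hm2
        have hm : m1.append m2 = d3 := d3.take_spec hud3
        have l1 : q.length = d1.length + d2.length := by
          rw [← hsplit, SimpleGraph.Walk.length_append]
        have l2 : d2.length = 1 + d3.length := by rw [hd3]; simp [SimpleGraph.Walk.length_cons]; omega
        have l3 : d3.length = m1.length + m2.length := by
          rw [← hm, SimpleGraph.Walk.length_append]
        have hwlen : (SimpleGraph.Walk.cons h q).length = q.length + 1 :=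
          SimpleGraph.Walk.length_cons _ _
        have hA : ((SimpleGraph.Walk.cons h2 m1).edges.map sgn).prod = 1 := by
          apply IH (n - 1) (by omega) _ ?_
          rw [SimpleGraph.Walk.length_cons]
          omega
        have hB : ((SimpleGraph.Walk.cons h (d1.append m2)).edges.map sgn).prod = 1 := by
          apply IH (n - 1) (by omega) _ ?_
          rw [SimpleGraph.Walk.length_cons, SimpleGraph.Walk.length_append]
          omega
        have hedges : (SimpleGraph.Walk.cons h q).edges
            = s(v, x) :: (d1.edges ++ (s(u, z) :: (m1.edges ++ m2.edges))) := by
          rw [SimpleGraph.Walk.edges_cons]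
          congr 1
          rw [← hsplit, SimpleGraph.Walk.edges_append]
          congr 1
          rw [hd3, SimpleGraph.Walk.edges_cons, ← hm, SimpleGraph.Walk.edges_append]
        rw [hedges]
        rw [SimpleGraph.Walk.edges_cons] at hA hB
        rw [SimpleGraph.Walk.edges_append] at hB
        simp only [List.map_cons, List.map_append, List.prod_cons, List.prod_append] at hA hB ⊢
        linear_combination (sgn s(v, x) * (List.map sgn d1.edges).prod
          * (List.map sgn m2.edges).prod) * hA + hB

lemma exists_switching (H : SimpleGraph V) (sgn : Sym2 V → ℝ)
    (hsgn : ∀ e ∈ H.edgeSet, sgn e = 1 ∨ sgn e = -1) (hco : IsCoherent H sgn) :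
    ∃ τ : V → ℝ, (∀ x, τ x = 1 ∨ τ x = -1) ∧
      ∀ ⦃x y : V⦄, H.Adj x y → sgn s(x, y) = τ x * τ y := by
  have reach : ∀ x : V, H.Reachable (Quot.out (H.connectedComponentMk x)) x := fun x =>
    SimpleGraph.ConnectedComponent.exact (Quot.out_eq _)
  let p : ∀ x : V, H.Walk (Quot.out (H.connectedComponentMk x)) x := fun x => (reach x).some
  refine ⟨fun x => (((p x).edges).map sgn).prod, fun x => ?_, fun x y hxy => ?_⟩
  · exact prod_pm (by
      intro a ha
      obtain ⟨e, he, rfl⟩ := List.mem_map.mp ha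
      exact hsgn e ((p x).edges_subset_edgeSet he))
  · have hc : H.connectedComponentMk y = H.connectedComponentMk x :=
      (SimpleGraph.ConnectedComponent.connectedComponentMk_eq_of_adj hxy).symm
    set r := Quot.out (H.connectedComponentMk x) with hr
    let py' : H.Walk r y := (p y).copy (by rw [hc]) rfl
    let w : H.Walk r r := (p x).append (SimpleGraph.Walk.cons hxy py'.reverse)
    have hw : ((w.edges.map sgn).prod) = 1 :=
      closed_walk_prod H sgn hsgn hco w.length w le_rfl
    have hwe : w.edges = (p x).edges ++ (s(x, y) :: ((p y).edges.reverse)) := by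
      simp only [w, SimpleGraph.Walk.edges_append, SimpleGraph.Walk.edges_cons,
        SimpleGraph.Walk.edges_reverse, SimpleGraph.Walk.edges_copy, py']
    rw [hwe] at hw
    simp only [List.map_append, List.map_cons, List.map_reverse, List.prod_append,
      List.prod_cons, List.prod_reverse] at hw
    have h1 : (((p x).edges).map sgn).prod = 1 ∨ (((p x).edges).map sgn).prod = -1 :=
      prod_pm (by
        intro a ha; obtain ⟨e, he, rfl⟩ := List.mem_map.mp ha
        exact hsgn e ((p x).edges_subset_edgeSet he))
    have h2 : (((p y).edges).map sgn).prod = 1 ∨ (((p y).edges).map sgn).prod = -1 :=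
      prod_pm (by
        intro a ha; obtain ⟨e, he, rfl⟩ := List.mem_map.mp ha
        exact hsgn e ((p y).edges_subset_edgeSet he))
    have h3 : sgn s(x, y) = 1 ∨ sgn s(x, y) = -1 := hsgn _ hxy
    show sgn s(x, y) = (((p x).edges).map sgn).prod * (((p y).edges).map sgn).prod
    rcases h1 with h1 | h1 <;> rcases h2 with h2 | h2 <;> rcases h3 with h3 | h3 <;>
      rw [h1, h2, h3] at hw ⊢ <;> nlinarith [hw]

lemma sum_pairs [Fintype V] [DecidableEq V] (G : SimpleGraph V) [DecidableRel G.Adj]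
    (b : Sym2 V → ℝ) :
    ∑ x : V, ∑ y : V, (if G.Adj x y then b s(x, y) else 0)
      = 2 * ∑ e ∈ G.edgeFinset, b e := by
  have step1 : ∀ x y : V, (if G.Adj x y then b s(x, y) else 0)
      = ∑ e ∈ G.edgeFinset, (if s(x, y) = e then b e else 0) := by
    intro x y
    by_cases h : G.Adj x y
    · rw [if_pos h, Finset.sum_ite_eq (G.edgeFinset) s(x,y) b]
      rw [if_pos (by rwa [SimpleGraph.mem_edgeFinset, SimpleGraph.mem_edgeSet])]
    · rw [if_neg h]
      refine (Finset.sum_eq_zero fun e he => ?_).symm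
      rw [if_neg]
      intro hxy
      rw [← hxy, SimpleGraph.mem_edgeFinset, SimpleGraph.mem_edgeSet] at he
      exact h he
  simp only [step1]
  have swap : ∑ x : V, ∑ y : V, ∑ e ∈ G.edgeFinset, (if s(x, y) = e then b e else 0)
      = ∑ e ∈ G.edgeFinset, ∑ x : V, ∑ y : V, (if s(x, y) = e then b e else 0) := by
    rw [Finset.sum_congr rfl fun (x : V) _ =>
      (Finset.sum_comm (s := Finset.univ) (t := G.edgeFinset)
        (f := fun (y : V) (e : Sym2 V) => if s(x, y) = e then b e else 0))]
    exact Finset.sum_comm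
  rw [swap, Finset.mul_sum]
  refine Finset.sum_congr rfl fun e he => ?_
  induction e with
  | _ a c =>
    have hac : a ≠ c := by
      rw [SimpleGraph.mem_edgeFinset, SimpleGraph.mem_edgeSet] at he
      exact he.ne
    rw [← Finset.sum_product']
    rw [Finset.sum_ite, Finset.sum_const_zero, add_zero, Finset.sum_const]
    have hfil : (Finset.univ ×ˢ Finset.univ).filter (fun p : V × V => s(p.1, p.2) = s(a, c))
        = {(a, c), (c, a)} := by
      ext p
      simp only [Finset.mem_filter, Finset.mem_product, Finset.mem_univ, true_and,
        Finset.mem_insert, Finset.mem_singleton, Sym2.eq_iff, Prod.ext_iff]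
    rw [hfil, Finset.card_insert_of_notMem (by simp [Prod.ext_iff, hac]),
      Finset.card_singleton]
    push_cast
    ring

lemma rayleigh_lb [Fintype V] [DecidableEq V] {A : Matrix V V ℝ} (hA : A.IsHermitian) {c : ℝ}
    (h : ∀ μ ∈ spectrum ℝ A, c ≤ μ) (f : V → ℝ) :
    c * (f ⬝ᵥ f) ≤ f ⬝ᵥ (A *ᵥ f) := by
  have h1 : ((c : ℝ) • (1 : Matrix V V ℝ)).IsHermitian := by
    rw [Matrix.smul_one_eq_diagonal]
    exact Matrix.isHermitian_diagonal _
  have hM : (A - c • (1 : Matrix V V ℝ)).IsHermitian := hA.sub h1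
  have hspec : spectrum ℝ (A - c • (1 : Matrix V V ℝ)) = spectrum ℝ A - ({c} : Set ℝ) := by
    have halg : (c • (1 : Matrix V V ℝ)) = algebraMap ℝ (Matrix V V ℝ) c :=
      (Algebra.algebraMap_eq_smul_one c).symm
    rw [halg, ← spectrum.sub_singleton_eq]
  have hpsd : (A - c • (1 : Matrix V V ℝ)).PosSemidef := by
    apply hM.posSemidef_iff_eigenvalues_nonneg.mpr
    intro i
    rw [Pi.zero_apply]
    have := hM.eigenvalues_mem_spectrum_real i
    rw [hspec] at this
    obtain ⟨μ, hμ, y, hy, hv⟩ := Set.mem_sub.mp this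
    rw [Set.mem_singleton_iff] at hy
    subst hy
    rw [← hv]
    have := h μ hμ
    linarith
  have h2 := hpsd.dotProduct_mulVec_nonneg f
  rw [star_trivial] at h2
  rw [Matrix.sub_mulVec, dotProduct_sub] at h2
  have h3 : f ⬝ᵥ ((c • (1 : Matrix V V ℝ)) *ᵥ f) = c * (f ⬝ᵥ f) := by
    rw [Matrix.smul_mulVec, Matrix.one_mulVec, dotProduct_smul, smul_eq_mul]
  rw [h3] at h2
  linarith


lemma twistedLaplacian_isHermitian [Fintype V] [DecidableEq V] (G : SimpleGraph V)
    [DecidableRel G.Adj] (sgn : Sym2 V → ℝ) : (twistedLaplacian G sgn).IsHermitian := by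
  apply Matrix.ext
  intro i j
  rw [Matrix.conjTranspose_apply, star_trivial]
  by_cases h : i = j
  · subst h; rfl
  · by_cases hadj : G.Adj i j
    · simp [twistedLaplacian, h, Ne.symm h, hadj, hadj.symm, Sym2.eq_swap]
    · have : ¬ G.Adj j i := fun hc => hadj hc.symm
      simp [twistedLaplacian, h, Ne.symm h, hadj, this]

lemma quad_form [Fintype V] [DecidableEq V] (G : SimpleGraph V) [DecidableRel G.Adj]
    (sgn : Sym2 V → ℝ) (hsgn : IsSigning G sgn) (f : V → ℝ) :
    2 * (f ⬝ᵥ ((twistedLaplacian G sgn) *ᵥ f))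
      = ∑ x : V, ∑ y : V, (if G.Adj x y then (f x - sgn s(x, y) * f y)^2 else 0) := by
  classical
  set L := twistedLaplacian G sgn with hL
  have hdot : f ⬝ᵥ (L *ᵥ f) = ∑ x : V, ∑ y : V, f x * (L x y * f y) := by
    simp [dotProduct, Matrix.mulVec, Finset.mul_sum]
  have hrow : ∀ x : V, ∑ y : V, f x * (L x y * f y)
      = (∑ y : V, if G.Adj x y then f x * f x else 0)
        - (∑ y : V, if G.Adj x y then sgn s(x, y) * (f x * f y) else 0) := by
    intro x
    have hsummand : ∀ y : V, f x * (L x y * f y)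
        = (if x = y then (G.degree x : ℝ) * (f x * f y) else 0)
          + (if G.Adj x y then -(sgn s(x, y)) * (f x * f y) else 0) := by
      intro y
      by_cases h : x = y
      · subst h
        simp [hL, twistedLaplacian, G.irrefl]
        ring
      · by_cases hadj : G.Adj x y
        · simp [hL, twistedLaplacian, h, hadj]; ring
        · simp [hL, twistedLaplacian, h, hadj]
    rw [Finset.sum_congr rfl fun y _ => hsummand y, Finset.sum_add_distrib]
    have h1 : ∑ y : V, (if x = y then (G.degree x : ℝ) * (f x * f y) else 0)
        = (G.degree x : ℝ) * (f x * f x) := by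
      rw [Finset.sum_ite_eq Finset.univ x (fun y => (G.degree x : ℝ) * (f x * f y))]
      simp
    have h2 : (G.degree x : ℝ) * (f x * f x) = ∑ y : V, (if G.Adj x y then f x * f x else 0) := by
      rw [Finset.sum_ite, Finset.sum_const_zero, add_zero, Finset.sum_const,
        ← SimpleGraph.neighborFinset_eq_filter, ← SimpleGraph.degree]
      simp [mul_comm]
    rw [h1, h2, sub_eq_add_neg, ← Finset.sum_neg_distrib]
    congr 1
    refine Finset.sum_congr rfl fun y _ => ?_
    split_ifs <;> ring
  have hsym1 : ∑ x : V, ∑ y : V, (if G.Adj x y then f x * f x else 0)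
      = ∑ x : V, ∑ y : V, (if G.Adj x y then f y * f y else 0) := by
    rw [Finset.sum_comm]
    refine Finset.sum_congr rfl fun x _ => Finset.sum_congr rfl fun y _ => ?_
    by_cases h : G.Adj x y
    · rw [if_pos h, if_pos h.symm]
    · rw [if_neg h, if_neg fun hc => h hc.symm]
  have hsym2 : ∑ x : V, ∑ y : V, (if G.Adj x y then sgn s(x, y) * (f x * f y) else 0)
      = ∑ x : V, ∑ y : V, (if G.Adj x y then sgn s(x, y) * (f x * f y) else 0) := rfl
  have hexpand : ∀ x y : V, (if G.Adj x y then (f x - sgn s(x, y) * f y)^2 else 0)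
      = (if G.Adj x y then f x * f x else 0) + (if G.Adj x y then f y * f y else 0)
        - 2 * (if G.Adj x y then sgn s(x, y) * (f x * f y) else 0) := by
    intro x y
    by_cases h : G.Adj x y
    · simp only [if_pos h]
      have hs : sgn s(x, y) = 1 ∨ sgn s(x, y) = -1 := hsgn _ h
      rcases hs with hs | hs <;> rw [hs] <;> ring
    · simp [h]
  calc 2 * (f ⬝ᵥ (L *ᵥ f))
      = 2 * ((∑ x : V, ∑ y : V, (if G.Adj x y then f x * f x else 0))
          - ∑ x : V, ∑ y : V, (if G.Adj x y then sgn s(x, y) * (f x * f y) else 0)) := by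
        rw [hdot, Finset.sum_congr rfl fun x _ => hrow x, Finset.sum_sub_distrib]
    _ = (∑ x : V, ∑ y : V, (if G.Adj x y then f x * f x else 0))
          + (∑ x : V, ∑ y : V, (if G.Adj x y then f y * f y else 0))
          - 2 * ∑ x : V, ∑ y : V, (if G.Adj x y then sgn s(x, y) * (f x * f y) else 0) := by
        rw [← hsym1]; ring
    _ = ∑ x : V, ∑ y : V, (if G.Adj x y then (f x - sgn s(x, y) * f y)^2 else 0) := by
        simp only [hexpand, Finset.sum_sub_distrib, Finset.sum_add_distrib, ← Finset.mul_sum]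

/-- The smallest eigenvalue `μ₁` of the twisted Laplacian satisfies
`μ₁ ≤ ψ̃(G) ≤ 2 ψ(G)`. -/
theorem mu1_le_psiTilde_le_two_psi [Fintype V] [DecidableEq V] [Nonempty V]
    (G : SimpleGraph V) [DecidableRel G.Adj] (sgn : Sym2 V → ℝ) (hsgn : IsSigning G sgn)
    (mu1 : ℝ)
    (hmem : mu1 ∈ spectrum ℝ (twistedLaplacian G sgn))
    (hmin : ∀ mu ∈ spectrum ℝ (twistedLaplacian G sgn), mu1 ≤ mu) :
    mu1 ≤ psiTilde G sgn ∧ psiTilde G sgn ≤ 2 * psi G sgn := by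
  classical
  constructor
  · -- mu1 ≤ psiTilde
    have hneT : Set.Nonempty {x : ℝ | ∃ S : Finset V, S.Nonempty ∧
        x = (((edgeBoundary G (↑S : Set V)).card : ℝ) + 4 * emc G sgn (↑S : Set V)) / S.card} :=
      ⟨_, Finset.univ, Finset.univ_nonempty, rfl⟩
    apply le_csInf hneT
    rintro x ⟨S, hS, rfl⟩
    have hSpos : (0:ℝ) < S.card := by exact_mod_cast hS.card_pos
    rw [le_div_iff₀ hSpos]
    -- emc is attained
    have hPne : Set.Nonempty {n : ℕ | ∃ F : Finset (Sym2 V), F.card = n ∧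
        ↑F ⊆ (inducedOn G (↑S : Set V)).edgeSet ∧
        IsCoherent ((inducedOn G (↑S : Set V)).deleteEdges ↑F) sgn} := by
      refine ⟨((inducedOn G (↑S : Set V)).edgeSet.toFinite.toFinset).card,
        (inducedOn G (↑S : Set V)).edgeSet.toFinite.toFinset, rfl, by rw [Set.Finite.coe_toFinset], ?_⟩
      intro v c hc
      exfalso
      cases c with
      | nil => exact hc.ne_nil rfl
      | cons h q =>
        rw [SimpleGraph.deleteEdges_adj] at h
        exact h.2 (by simpa using (inducedOn G (↑S : Set V)).mem_edgeSet.mpr h.1)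
    have hmemP := Nat.sInf_mem hPne
    obtain ⟨F, hFcard, hFsub, hFcoh⟩ := hmemP
    set H := (inducedOn G (↑S : Set V)).deleteEdges ↑F with hH
    have hHadj : ∀ {a c : V}, H.Adj a c → G.Adj a c ∧ a ∈ S ∧ c ∈ S ∧ s(a, c) ∉ F := by
      intro a c h
      rw [hH, SimpleGraph.deleteEdges_adj] at h
      exact ⟨h.1.1, by simpa using h.1.2.1, by simpa using h.1.2.2, by simpa using h.2⟩
    have hsgnH : ∀ e ∈ H.edgeSet, sgn e = 1 ∨ sgn e = -1 := by
      intro e he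
      induction e with
      | _ a c =>
        rw [SimpleGraph.mem_edgeSet] at he
        exact hsgn _ (G.mem_edgeSet.mpr (hHadj he).1)
    obtain ⟨τ, hτ1, hτ2⟩ := exists_switching H sgn hsgnH hFcoh
    set f : V → ℝ := fun x => if x ∈ S then τ x else 0 with hf
    have hray := rayleigh_lb (twistedLaplacian_isHermitian G sgn) hmin f
    have hquad := quad_form G sgn hsgn f
    have hnorm : f ⬝ᵥ f = (S.card : ℝ) := by
      have hterm : ∀ x : V, f x * f x = if x ∈ S then 1 else 0 := by
        intro x
        by_cases hx : x ∈ S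
        · rcases hτ1 x with h | h <;> simp [hf, hx, h]
        · simp [hf, hx]
      rw [dotProduct]
      rw [Finset.sum_congr rfl fun x _ => hterm x, Finset.sum_ite_mem, Finset.univ_inter,
        Finset.sum_const, nsmul_eq_mul, mul_one]
    set b : Sym2 V → ℝ :=
      fun e => if e ∈ F then 4 else if e ∈ edgeBoundary G (↑S : Set V) then 1 else 0 with hb
    have hfval : ∀ x : V, f x = 1 ∨ f x = -1 ∨ f x = 0 := by
      intro x
      by_cases hx : x ∈ S
      · rcases hτ1 x with h | h <;> simp [hf, hx, h]
      · simp [hf, hx]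
    have hbound : ∀ x y : V, (if G.Adj x y then (f x - sgn s(x, y) * f y)^2 else 0)
        ≤ (if G.Adj x y then b s(x, y) else 0) := by
      intro x y
      by_cases hadj : G.Adj x y
      swap
      · simp [hadj]
      rw [if_pos hadj, if_pos hadj]
      have hs : sgn s(x, y) = 1 ∨ sgn s(x, y) = -1 := hsgn _ (G.mem_edgeSet.mpr hadj)
      by_cases hFm : s(x, y) ∈ F
      · have hb4 : b s(x, y) = 4 := by simp [hb, hFm]
        rw [hb4]
        rcases hfval x with h1 | h1 | h1 <;> rcases hfval y with h2 | h2 | h2 <;>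
          rcases hs with h3 | h3 <;> rw [h1, h2, h3] <;> norm_num
      · have hbnn : (0:ℝ) ≤ b s(x, y) := by
          rw [hb]; dsimp only; split_ifs <;> norm_num
        by_cases hx : x ∈ S <;> by_cases hy : y ∈ S
        · -- interior edge, not deleted
          have hHxy : H.Adj x y := by
            rw [hH, SimpleGraph.deleteEdges_adj]
            exact ⟨⟨hadj, by simpa using hx, by simpa using hy⟩, by simpa using hFm⟩
          have h0 : (f x - sgn s(x, y) * f y)^2 = 0 := by
            rw [hτ2 hHxy]
            have hfx : f x = τ x := if_pos hx
            have hfy : f y = τ y := if_pos hy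
            rw [hfx, hfy]
            rcases hτ1 x with h1 | h1 <;> rcases hτ1 y with h2 | h2 <;>
              rw [h1, h2] <;> norm_num
          rw [h0]; exact hbnn
        · -- boundary
          have hB : s(x, y) ∈ edgeBoundary G (↑S : Set V) := by
            simp only [edgeBoundary, Finset.mem_filter]
            exact ⟨Finset.mem_univ _, G.mem_edgeSet.mpr hadj,
              x, y, rfl, by simpa using hx, by simpa using hy⟩
          have hb1 : b s(x, y) = 1 := by simp [hb, hFm, hB]
          rw [hb1]
          have hfy : f y = 0 := by simp [hf, hy]
          rw [hfy]
          rcases hfval x with h1 | h1 | h1 <;> rw [h1] <;> norm_num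
        · have hB : s(x, y) ∈ edgeBoundary G (↑S : Set V) := by
            simp only [edgeBoundary, Finset.mem_filter]
            exact ⟨Finset.mem_univ _, G.mem_edgeSet.mpr hadj,
              y, x, Sym2.eq_swap.symm, by simpa using hy, by simpa using hx⟩
          have hb1 : b s(x, y) = 1 := by simp [hb, hFm, hB]
          rw [hb1]
          have hfx : f x = 0 := by simp [hf, hx]
          rw [hfx]
          rcases hfval y with h1 | h1 | h1 <;> rcases hs with h3 | h3 <;>
            rw [h1, h3] <;> norm_num
        · have hfx : f x = 0 := by simp [hf, hx]
          have hfy : f y = 0 := by simp [hf, hy]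
          rw [hfx, hfy]
          simpa using hbnn
    -- edge sums
    have hFsubE : F ⊆ G.edgeFinset := by
      intro e he
      have h2 := hFsub he
      rw [SimpleGraph.mem_edgeFinset]
      induction e with
      | _ a c =>
        rw [SimpleGraph.mem_edgeSet] at h2 ⊢
        exact h2.1
    have hBsubE : edgeBoundary G (↑S : Set V) ⊆ G.edgeFinset := by
      intro e he
      simp only [edgeBoundary, Finset.mem_filter] at he
      rw [SimpleGraph.mem_edgeFinset]
      exact he.2.1
    have hdisj : ∀ e ∈ F, e ∉ edgeBoundary G (↑S : Set V) := by
      intro e heF heB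
      simp only [edgeBoundary, Finset.mem_filter] at heB
      obtain ⟨-, -, a, c, rfl, haS, hcS⟩ := heB
      have h2 := hFsub heF
      rw [SimpleGraph.mem_edgeSet] at h2
      exact hcS h2.2.2
    have hEsum : ∑ e ∈ G.edgeFinset, b e
        = 4 * (F.card : ℝ) + ((edgeBoundary G (↑S : Set V)).card : ℝ) := by
      have hterm : ∀ e ∈ G.edgeFinset, b e
          = (if e ∈ F then (4:ℝ) else 0) + (if e ∈ edgeBoundary G (↑S : Set V) then 1 else 0) := by
        intro e _
        by_cases h1 : e ∈ F
        · simp [hb, h1, hdisj e h1]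
        · simp [hb, h1]
      rw [Finset.sum_congr rfl hterm, Finset.sum_add_distrib]
      congr 1
      · rw [Finset.sum_ite_mem, Finset.inter_eq_right.mpr hFsubE, Finset.sum_const,
          nsmul_eq_mul, mul_comm]
      · rw [Finset.sum_ite_mem, Finset.inter_eq_right.mpr hBsubE, Finset.sum_const,
          nsmul_eq_mul, mul_one]
    have hsums : ∑ x : V, ∑ y : V, (if G.Adj x y then (f x - sgn s(x, y) * f y)^2 else 0)
        ≤ ∑ x : V, ∑ y : V, (if G.Adj x y then b s(x, y) else 0) :=
      Finset.sum_le_sum fun x _ => Finset.sum_le_sum fun y _ => hbound x y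
    have hpairs := sum_pairs G b
    rw [hnorm] at hray
    have hcardF : (F.card : ℝ) = (emc G sgn (↑S : Set V) : ℝ) := by exact_mod_cast hFcard
    nlinarith [hray, hquad, hsums, hpairs, hEsum, hcardF]
  · -- psiTilde ≤ 2 psi
    have hfin : {x : ℝ | ∃ S : Finset V, S.Nonempty ∧ x = psiSet G sgn S}.Finite :=
      (Set.finite_range fun S : Finset V => psiSet G sgn S).subset
        (by rintro x ⟨S, _, rfl⟩; exact ⟨S, rfl⟩)
    have hne : {x : ℝ | ∃ S : Finset V, S.Nonempty ∧ x = psiSet G sgn S}.Nonempty :=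
      ⟨psiSet G sgn Finset.univ, Finset.univ, Finset.univ_nonempty, rfl⟩
    obtain ⟨S0, hS0, hval⟩ := hne.csInf_mem hfin
    have hT : psiTilde G sgn
        ≤ (((edgeBoundary G (↑S0 : Set V)).card : ℝ) + 4 * emc G sgn (↑S0 : Set V)) / S0.card := by
      apply csInf_le
      · apply Set.Finite.bddBelow
        exact (Set.finite_range fun S : Finset V =>
          (((edgeBoundary G (↑S : Set V)).card : ℝ) + 4 * emc G sgn (↑S : Set V)) / S.card).subset
          (by rintro x ⟨S, _, rfl⟩; exact ⟨S, rfl⟩)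
      · exact ⟨S0, hS0, rfl⟩
    have hcard : (0:ℝ) < S0.card := by exact_mod_cast hS0.card_pos
    have h2 : (((edgeBoundary G (↑S0 : Set V)).card : ℝ) + 4 * emc G sgn (↑S0 : Set V)) / S0.card
        ≤ 2 * psiSet G sgn S0 := by
      rw [psiSet, ← mul_div_assoc]
      have hnum : (((edgeBoundary G (↑S0 : Set V)).card : ℝ) + 4 * emc G sgn (↑S0 : Set V))
          ≤ 2 * (((edgeBoundary G (↑S0 : Set V)).card : ℝ) + 2 * emc G sgn (↑S0 : Set V)) := by
        have h1 : (0:ℝ) ≤ ((edgeBoundary G (↑S0 : Set V)).card : ℝ) := Nat.cast_nonneg _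
        linarith
      gcongr
    rw [psi, hval]
    linarith


end SignedPaper
end
end
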